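/- Let p > 3 be prime, r odd coprime to p, and a ∈ F_p(t) \ F_p. For each positive integer N there exists a ∈ F_p(t) \ F_p such that the curve y^2 = x(x^r+1)(x^r+a^r) has at least N distinct F_p(t)-rational affine points. -/

import Mathlib

lemma X_pow_inj (F : Type*) [Field F] {a b : ℕ}
    (h : (RatFunc.X : RatFunc F) ^ a = RatFunc.X ^ b) : a = b := by
  have h2 : (algebraMap (Polynomial F) (RatFunc F)) (Polynomial.X ^ a)
      = (algebraMap (Polynomial F) (RatFunc F)) (Polynomial.X ^ b) := by
    simpa [map_pow, RatFunc.algebraMap_X] using h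
  have h3 := RatFunc.algebraMap_injective F h2
  have := congrArg Polynomial.natDegree h3
  simpa using this

lemma point_eq (p : ℕ) [Fact p.Prime] (hp : 3 < p) (r e m : ℕ) (hr : Odd r) :
    ((RatFunc.X : RatFunc (ZMod p)) ^ (e * ((r + 1) / 2)) *
        (RatFunc.X ^ (e * r) + 1) ^ ((p ^ m + 1) / 2)) ^ 2
      = RatFunc.X ^ e * ((RatFunc.X ^ e) ^ r + 1) *
        ((RatFunc.X ^ e) ^ r + (RatFunc.X ^ (e * (p ^ m + 1))) ^ r) := by
  haveI : CharP (RatFunc (ZMod p)) p :=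
    charP_of_injective_algebraMap (algebraMap (ZMod p) (RatFunc (ZMod p))).injective p
  have hpodd : Odd p := (Fact.out : p.Prime).odd_of_ne_two (by omega)
  have hs : (r + 1) / 2 * 2 = r + 1 := Nat.div_mul_cancel hr.add_one.two_dvd
  have hq : (p ^ m + 1) / 2 * 2 = p ^ m + 1 :=
    Nat.div_mul_cancel (hpodd.pow).add_one.two_dvd
  have hdr : e * (p ^ m + 1) * r = e * r + e * r * p ^ m := by ring
  have frob : ((RatFunc.X : RatFunc (ZMod p)) ^ (e * r) + 1) ^ p ^ m
      = (RatFunc.X ^ (e * r)) ^ p ^ m + 1 := by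
    rw [add_pow_char_pow]; simp
  rw [← pow_mul, ← pow_mul, hdr, pow_add, pow_mul (RatFunc.X) (e * r) (p ^ m)]
  set u : RatFunc (ZMod p) := RatFunc.X ^ (e * r) with hu
  have key : u + u * u ^ p ^ m = u * (u + 1) ^ p ^ m := by rw [frob]; ring
  rw [key, mul_pow, ← pow_mul, ← pow_mul, mul_assoc e, hs, hq]
  have h1 : (RatFunc.X : RatFunc (ZMod p)) ^ (e * (r + 1)) = u * RatFunc.X ^ e := by
    rw [hu, ← pow_add]; ring_nf
  have h2 : ((u + 1) : RatFunc (ZMod p)) ^ (p ^ m + 1) = (u + 1) ^ p ^ m * (u + 1) :=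
    pow_succ _ _
  rw [h1, h2]; ring

/-- Let `p > 3` be prime and `r` odd coprime to `p`.  For each positive
integer `N` there exists a non-constant `a ∈ F_p(t)` such that the curve
`y^2 = x (x^r + 1)(x^r + a^r)` has at least `N` distinct `F_p(t)`-rational
affine points. -/
theorem stmt3 (p : ℕ) [Fact p.Prime] (hp : 3 < p) (r : ℕ) (hr : Odd r)
    (hrp : Nat.Coprime r p) (N : ℕ) (hN : 0 < N) :
    ∃ a : RatFunc (ZMod p),
      a ∉ Set.range (algebraMap (ZMod p) (RatFunc (ZMod p))) ∧
      ∃ S : Finset (RatFunc (ZMod p) × RatFunc (ZMod p)),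
        N ≤ S.card ∧
        ∀ q ∈ S, q.2 ^ 2 = q.1 * (q.1 ^ r + 1) * (q.1 ^ r + a ^ r) := by
  classical
  have hp2 : 2 ≤ p := by omega
  set n : ℕ := 3 ^ (N - 1) with hn
  -- divisibility
  have hdvd : ∀ k < N, p ^ 3 ^ k + 1 ∣ p ^ n + 1 := by
    intro k hk
    have hodd : Odd (3 ^ (N - 1 - k)) := Odd.pow (by decide)
    have h := hodd.nat_add_dvd_pow_add_pow (p ^ 3 ^ k) 1
    have hexp : (p ^ 3 ^ k) ^ 3 ^ (N - 1 - k) = p ^ n := by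
      rw [← pow_mul, ← pow_add]
      congr 2
      omega
    simpa [hexp] using h
  set e : ℕ → ℕ := fun k => (p ^ n + 1) / (p ^ 3 ^ k + 1) with he
  have hemul : ∀ k < N, e k * (p ^ 3 ^ k + 1) = p ^ n + 1 := fun k hk =>
    Nat.div_mul_cancel (hdvd k hk)
  refine ⟨RatFunc.X ^ (p ^ n + 1), ?_, ?_⟩
  · rintro ⟨c, hc⟩
    have hc' : (algebraMap (Polynomial (ZMod p)) (RatFunc (ZMod p))) (Polynomial.C c)
        = (algebraMap (Polynomial (ZMod p)) (RatFunc (ZMod p))) (Polynomial.X ^ (p ^ n + 1)) := by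
      rw [RatFunc.algebraMap_C, ← RatFunc.algebraMap_eq_C]
      simpa [map_pow, RatFunc.algebraMap_X] using hc
    have h3 := RatFunc.algebraMap_injective (ZMod p) hc'
    have h4 := congrArg Polynomial.natDegree h3
    rw [Polynomial.natDegree_C, Polynomial.natDegree_X_pow] at h4
    have h5 : 0 < p ^ n := Nat.pow_pos (by omega)
    omega
  · set f : ℕ → RatFunc (ZMod p) × RatFunc (ZMod p) := fun k =>
      (RatFunc.X ^ e k,
        RatFunc.X ^ (e k * ((r + 1) / 2)) *
          (RatFunc.X ^ (e k * r) + 1) ^ ((p ^ 3 ^ k + 1) / 2)) with hf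
    refine ⟨(Finset.range N).image f, ?_, ?_⟩
    · have hinj : Set.InjOn f (Finset.range N) := by
        intro k hk j hj hkj
        simp only [Finset.coe_range, Set.mem_Iio] at hk hj
        have h1 : (RatFunc.X : RatFunc (ZMod p)) ^ e k = RatFunc.X ^ e j :=
          congrArg Prod.fst hkj
        have h2 : e k = e j := X_pow_inj _ h1
        have h3 : e k * (p ^ 3 ^ k + 1) = e k * (p ^ 3 ^ j + 1) := by
          rw [hemul k hk, h2, hemul j hj]
        have hek : e k ≠ 0 := by
          intro h0
          have hh := hemul k hk
          rw [h0, zero_mul] at hh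
          exact absurd hh.symm (by positivity)
        have h4 : p ^ 3 ^ k + 1 = p ^ 3 ^ j + 1 := Nat.eq_of_mul_eq_mul_left (Nat.pos_of_ne_zero hek) h3
        have h5 : (3:ℕ) ^ k = 3 ^ j := Nat.pow_right_injective hp2 (Nat.add_right_cancel h4)
        exact Nat.pow_right_injective (by norm_num) h5
      rw [Finset.card_image_of_injOn hinj, Finset.card_range]
    · intro q hq
      simp only [Finset.mem_image, Finset.mem_range] at hq
      obtain ⟨k, hk, rfl⟩ := hq
      have := point_eq p hp r (e k) (3 ^ k) hr
      rw [hemul k hk] at this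
      simpa [hf] using this
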